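/- Let δ > 0, t₀ > 0, and let g : [0, t₀] → ℝ be continuously differentiable with g ≥ 0, g(0) = 0, and 2 g′(t) ≤ 1 for all t ∈ [0, t₀]. Then e^{−2δ t₀} g(t₀)² ≤ ∫₀^{t₀} e^{−δτ} g(τ) dτ. -/

import Mathlib

open Set Filter

/-- version for exponents `m ≥ 3`: if `g ≥ 0` is `C¹` on `[0, t₀]` with
`g(0) = 0` and `2 g′ ≤ 1`, then `e^{−2δt₀} g(t₀)² ≤ ∫₀^{t₀} e^{−δτ} g(τ) dτ` for every
`δ > 0`. -/
theorem sq_le_integral_of_deriv_le (δ : ℝ) (hδ : 0 < δ)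
    (t₀ : ℝ) (ht₀ : 0 < t₀)
    (g g' : ℝ → ℝ)
    (hderiv : ∀ t ∈ Set.Icc 0 t₀, HasDerivWithinAt g (g' t) (Set.Icc 0 t₀) t)
    (hcont : ContinuousOn g' (Set.Icc 0 t₀))
    (hnonneg : ∀ t ∈ Set.Icc 0 t₀, 0 ≤ g t)
    (hzero : g 0 = 0)
    (hineq : ∀ t ∈ Set.Icc 0 t₀, 2 * g' t ≤ 1) :
    Real.exp (-2 * δ * t₀) * g t₀ ^ 2
      ≤ ∫ τ in (0 : ℝ)..t₀, Real.exp (-δ * τ) * g τ := by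
  have hg : ContinuousOn g (Set.Icc 0 t₀) := fun t ht => (hderiv t ht).continuousWithinAt
  have huIcc : Set.uIcc (0:ℝ) t₀ = Set.Icc 0 t₀ := Set.uIcc_of_le ht₀.le
  have hint1 : IntervalIntegrable (fun τ => 2 * g τ * g' τ) MeasureTheory.volume 0 t₀ := by
    apply ContinuousOn.intervalIntegrable
    rw [huIcc]
    exact (continuousOn_const.mul hg).mul hcont
  have hint2 : IntervalIntegrable (fun τ => Real.exp (-2 * δ * t₀) * (2 * g τ * g' τ))
      MeasureTheory.volume 0 t₀ := hint1.const_mul _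
  have hint3 : IntervalIntegrable (fun τ => Real.exp (-δ * τ) * g τ) MeasureTheory.volume 0 t₀ := by
    apply ContinuousOn.intervalIntegrable
    rw [huIcc]
    exact (((Real.continuous_exp.comp (continuous_const.mul continuous_id)).continuousOn)).mul hg
  have hsq : ∫ τ in (0:ℝ)..t₀, 2 * g τ * g' τ = g t₀ ^ 2 := by
    have h := intervalIntegral.integral_eq_sub_of_hasDeriv_right_of_le ht₀.le
      (f := fun t => g t ^ 2) (f' := fun t => 2 * g t * g' t) (hg.pow 2)
      (fun x hx => by
        have h1 := (hderiv x ⟨hx.1.le, hx.2.le⟩).pow 2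
        have h2 : Set.Icc (0:ℝ) t₀ ∈ nhdsWithin x (Set.Ioi x) :=
          Icc_mem_nhdsGT_of_mem ⟨hx.1.le, hx.2⟩
        have := h1.mono_of_mem_nhdsWithin h2
        convert this using 1
        · rfl
        · norm_num) hint1
    rw [h]
    simp [hzero]
  have key : ∫ τ in (0:ℝ)..t₀, Real.exp (-2 * δ * t₀) * (2 * g τ * g' τ)
      ≤ ∫ τ in (0:ℝ)..t₀, Real.exp (-δ * τ) * g τ := by
    apply intervalIntegral.integral_mono_on ht₀.le hint2 hint3
    intro τ hτ
    have h1 := hnonneg τ hτ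
    have h2 := hineq τ hτ
    have h3 : 2 * g τ * g' τ ≤ g τ := by nlinarith
    have h4 : Real.exp (-2 * δ * t₀) ≤ Real.exp (-δ * τ) := by
      apply Real.exp_le_exp.2
      nlinarith [hτ.1, hτ.2]
    calc Real.exp (-2 * δ * t₀) * (2 * g τ * g' τ)
        ≤ Real.exp (-2 * δ * t₀) * g τ :=
          mul_le_mul_of_nonneg_left h3 (Real.exp_pos _).le
      _ ≤ Real.exp (-δ * τ) * g τ := mul_le_mul_of_nonneg_right h4 h1
  rwa [intervalIntegral.integral_const_mul, hsq] at key
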